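/- If (N : M) = p_1 for a prime ideal p_1 of R, then (⟨E_M(N)⟩ : M) = p_1. -/

import Mathlib

/-- If `(N : M) = p₁` for a prime ideal `p₁` of `R`, then
`(⟨E_M(N)⟩ : M) = p₁`. -/
theorem colon_envelope_of_colon_prime
    {R M : Type*} [CommRing R] [IsNoetherianRing R]
    [AddCommGroup M] [Module R M] [Module.Finite R M]
    (N : Submodule R M) (hN : N ≠ ⊤)
    (p₁ : Ideal R) (hp₁ : p₁.IsPrime)
    (hcolon : N.colon ⊤ = p₁) :
    (Submodule.span R {x : M | ∃ (r : R) (m : M) (t : ℕ),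
        0 < t ∧ r ^ t • m ∈ N ∧ x = r • m}).colon ⊤ = p₁ := by
  set S : Set M := {x : M | ∃ (r : R) (m : M) (t : ℕ), 0 < t ∧ r ^ t • m ∈ N ∧ x = r • m}
    with hS
  have hone : (1 : R) ∉ p₁ := fun h => hp₁.ne_top (Ideal.eq_top_of_isUnit_mem _ h isUnit_one)
  have hp1M : ∀ r ∈ p₁, ∀ m : M, r • m ∈ N := by
    intro r hr m
    rw [← hcolon] at hr
    exact Submodule.mem_colon.mp hr m (Set.mem_univ m)
  -- the saturation of N with respect to the complement of p₁
  let T : Submodule R M :=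
    { carrier := {m : M | ∃ c, c ∉ p₁ ∧ c • m ∈ N}
      zero_mem' := ⟨1, hone, by simp⟩
      add_mem' := by
        rintro a b ⟨c, hc, hca⟩ ⟨d, hd, hdb⟩
        refine ⟨c * d, fun h => (hp₁.mem_or_mem h).elim hc hd, ?_⟩
        rw [smul_add]
        exact Submodule.add_mem N (by rw [mul_comm, mul_smul]; exact N.smul_mem d hca)
          (by rw [mul_smul]; exact N.smul_mem c hdb)
      smul_mem' := by
        rintro r a ⟨c, hc, hca⟩
        exact ⟨c, hc, by rw [smul_comm]; exact N.smul_mem r hca⟩ }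
  have hST : Submodule.span R S ≤ T := by
    rw [Submodule.span_le]
    rintro x ⟨r, m, t, ht, hrt, rfl⟩
    by_cases hr : r ∈ p₁
    · exact ⟨1, hone, by simpa using hp1M r hr m⟩
    · refine ⟨r ^ t, fun h => hr (hp₁.mem_of_pow_mem t h), ?_⟩
      rw [smul_comm]
      exact N.smul_mem r hrt
  obtain ⟨F, hF⟩ := IsNoetherian.noetherian T
  have key : ∀ (G : Finset M), (∀ x ∈ G, (x : M) ∈ T) →
      ∃ c, c ∉ p₁ ∧ ∀ x ∈ Submodule.span R (G : Set M), c • x ∈ N := by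
    intro G
    classical
    induction G using Finset.induction_on with
    | empty =>
        intro _
        refine ⟨1, hone, ?_⟩
        intro x hx
        simp only [Finset.coe_empty, Submodule.span_empty, Submodule.mem_bot] at hx
        simp [hx]
    | insert a G ha ih =>
        intro hmem
        obtain ⟨cG, hcG, hG⟩ := ih (fun x hx => hmem x (Finset.mem_insert_of_mem hx))
        obtain ⟨ca, hca, haN⟩ := hmem a (Finset.mem_insert_self a G)
        refine ⟨cG * ca, fun h => (hp₁.mem_or_mem h).elim hcG hca, ?_⟩
        intro x hx
        rw [Finset.coe_insert] at hx
        obtain ⟨r, z, hz, rfl⟩ := Submodule.mem_span_insert.mp hx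
        rw [smul_add]
        refine Submodule.add_mem N ?_ ?_
        · rw [smul_comm, mul_smul]
          exact N.smul_mem r (N.smul_mem cG haN)
        · rw [mul_comm, mul_smul]
          exact N.smul_mem ca (hG z hz)
  have hFT : ∀ x ∈ F, (x : M) ∈ T := fun x hx => hF ▸ Submodule.subset_span hx
  obtain ⟨c, hc, hcN⟩ := key F hFT
  have hcT : ∀ x ∈ T, c • x ∈ N := by
    intro x hx
    exact hcN x (by rw [hF]; exact hx)
  apply le_antisymm
  · intro s hs
    have hsm : ∀ m : M, s • m ∈ Submodule.span R S :=
      fun m => Submodule.mem_colon.mp hs m (Set.mem_univ m)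
    have hcs : c * s ∈ N.colon ⊤ := by
      rw [Submodule.mem_colon]
      intro m _
      rw [mul_smul]
      exact hcT _ (hST (hsm m))
    rw [hcolon] at hcs
    exact (hp₁.mem_or_mem hcs).resolve_left hc
  · intro s hs
    rw [Submodule.mem_colon]
    intro m _
    exact Submodule.subset_span ⟨1, s • m, 1, one_pos, by simpa using hp1M s hs m,
      (one_smul _ _).symm⟩
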